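/- Suppose P(X_m = 0 for some m) < 1. Then t_n → 0 as n → ∞, and for any non-decreasing sequence of stopping times (T_m)_{m≥1} with E[T_m] < ∞ for every m and T_m → T_∂ almost surely, E[X_{T_m}] → +∞ as m → ∞. -/

import Mathlib

open MeasureTheory Filter Topology Finset
open scoped ENNReal NNReal Classical

/-- Partial products `t_n = (l_1 ⋯ l_n)/(r_1 ⋯ r_n)`, with `t_0 = 1`. -/
noncomputable def tp (l r : ℕ → ℝ) (n : ℕ) : ℝ :=
  (∏ i ∈ Finset.Icc 1 n, l i) / (∏ i ∈ Finset.Icc 1 n, r i)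

/-- `x_n = Σ_{i=0}^{n-1} t_i`. -/
noncomputable def xp (l r : ℕ → ℝ) (n : ℕ) : ℝ :=
  ∑ i ∈ Finset.range n, tp l r i

/-- The natural filtration of the process `X` (σ-algebra generated by `X_0, …, X_m`). -/
def natFilt {Ω : Type*} (X : ℕ → Ω → ℕ) (m : ℕ) : MeasurableSpace Ω :=
  ⨆ i ∈ Finset.range (m + 1), MeasurableSpace.comap (X i) ⊤

/-- A birth–death chain on ℕ started at `k`, with up–probabilities `r n` and
down–probabilities `l n` for states `n ≥ 1`, and `0` absorbing.  The Markov
property is encoded by conditioning on arbitrary events of the natural filtration. -/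
structure IsBDChain {Ω : Type*} [MeasurableSpace Ω] (P : Measure Ω)
    (X : ℕ → Ω → ℕ) (k : ℕ) (l r : ℕ → ℝ) : Prop where
  isProb : IsProbabilityMeasure P
  one_le_k : 1 ≤ k
  l_pos : ∀ n, 1 ≤ n → 0 < l n
  r_pos : ∀ n, 1 ≤ n → 0 < r n
  lr_one : ∀ n, 1 ≤ n → l n + r n = 1
  meas : ∀ m, Measurable (X m)
  init : ∀ᵐ ω ∂P, X 0 ω = k
  absorb : ∀ᵐ ω ∂P, ∀ m, X m ω = 0 → X (m + 1) ω = 0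
  step_up : ∀ m n, 1 ≤ n → ∀ A : Set Ω, MeasurableSet[natFilt X m] A →
    P (A ∩ {ω | X m ω = n ∧ X (m + 1) ω = n + 1}) =
      ENNReal.ofReal (r n) * P (A ∩ {ω | X m ω = n})
  step_down : ∀ m n, 1 ≤ n → ∀ A : Set Ω, MeasurableSet[natFilt X m] A →
    P (A ∩ {ω | X m ω = n ∧ X (m + 1) ω = n - 1}) =
      ENNReal.ofReal (l n) * P (A ∩ {ω | X m ω = n})

/-- A (finite-valued) stopping time for the natural filtration of `X`. -/
def IsBDStop {Ω : Type*} (X : ℕ → Ω → ℕ) (T : Ω → ℕ) : Prop :=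
  ∀ m, MeasurableSet[natFilt X m] {ω | T ω = m}

/-- An extended-ℕ-valued stopping time for the natural filtration of `X`. -/
def IsBDStopE {Ω : Type*} (X : ℕ → Ω → ℕ) (T : Ω → ℕ∞) : Prop :=
  ∀ m : ℕ, MeasurableSet[natFilt X m] {ω | T ω = (m : ℕ∞)}

/-- First hitting time of the set `S ⊆ ℕ` by the path `m ↦ X m ω`, valued in `ℕ∞`. -/
noncomputable def hitTime {Ω : Type*} (X : ℕ → Ω → ℕ) (S : Set ℕ) (ω : Ω) : ℕ∞ :=
  sInf ((fun m : ℕ => (m : ℕ∞)) '' {m | X m ω ∈ S})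

/-- `T_∂`: the first hitting time of `0`, with value `∞` if `0` is never hit. -/
noncomputable def hit0 {Ω : Type*} (X : ℕ → Ω → ℕ) (ω : Ω) : ℕ∞ :=
  hitTime X {0} ω

/-- `G_T^n`: the number of times `m` with `0 ≤ m ≤ T-1` and `X_m = n` (finite `T`). -/
def count {Ω : Type*} (X : ℕ → Ω → ℕ) (n : ℕ) (T : Ω → ℕ) (ω : Ω) : ℕ :=
  ((Finset.range (T ω)).filter fun m => X m ω = n).card

/-- `G_τ^n` for an `ℕ∞`-valued time `τ`, valued in `ℝ≥0∞`. -/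
noncomputable def countE {Ω : Type*} (X : ℕ → Ω → ℕ) (n : ℕ) (τ : Ω → ℕ∞) (ω : Ω) : ℝ≥0∞ :=
  ∑' m : ℕ, if (m : ℕ∞) < τ ω ∧ X m ω = n then 1 else 0


set_option linter.unusedSectionVars false
set_option maxHeartbeats 1000000
section basics
variable {l r : ℕ → ℝ} (hl : ∀ n, 1 ≤ n → 0 < l n) (hr : ∀ n, 1 ≤ n → 0 < r n)
include hl hr

lemma tp_pos (n : ℕ) : 0 < tp l r n := by
  apply div_pos <;> exact Finset.prod_pos (fun i hi => by
    first
    | exact hl i (Finset.mem_Icc.1 hi).1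
    | exact hr i (Finset.mem_Icc.1 hi).1)

omit hl hr in
lemma xp_zero : xp l r 0 = 0 := by simp [xp]

omit hl hr in
lemma xp_succ (n : ℕ) : xp l r (n + 1) = xp l r n + tp l r n := by
  simp [xp, Finset.sum_range_succ]

lemma xp_nonneg (n : ℕ) : 0 ≤ xp l r n :=
  Finset.sum_nonneg fun i _ => (tp_pos hl hr i).le

lemma xp_mono : Monotone (xp l r) := by
  apply monotone_nat_of_le_succ
  intro n
  rw [xp_succ]
  linarith [tp_pos hl hr n]

omit hl in
lemma tp_succ (n : ℕ) (hn : 1 ≤ n) : tp l r n = tp l r (n - 1) * (l n / r n) := by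
  obtain ⟨m, rfl⟩ := Nat.exists_eq_add_of_le hn
  simp only [Nat.add_sub_cancel_left, tp]
  rw [add_comm 1 m]
  rw [Finset.prod_Icc_succ_top (by omega), Finset.prod_Icc_succ_top (by omega)]
  have hrn : r (m + 1) ≠ 0 := (hr (m+1) (by omega)).ne'
  have : (0:ℝ) < ∏ i ∈ Finset.Icc 1 m, r i :=
    Finset.prod_pos fun i hi => hr i (Finset.mem_Icc.1 hi).1
  field_simp
  try ring

omit hl in
lemma key_identity (hlr : ∀ n, 1 ≤ n → l n + r n = 1) (n : ℕ) (hn : 1 ≤ n) :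
    r n * xp l r (n + 1) + l n * xp l r (n - 1) = xp l r n := by
  obtain ⟨m, rfl⟩ := Nat.exists_eq_add_of_le hn
  have h1 : xp l r (1 + m) = xp l r m + tp l r m := by
    rw [add_comm 1 m]; exact xp_succ m
  have h2 : xp l r (1 + m + 1) = xp l r m + tp l r m + tp l r (1 + m) := by
    rw [xp_succ, h1]
  have h3 : tp l r (1 + m) = tp l r m * (l (1+m) / r (1+m)) := by
    have := tp_succ (l := l) hr (1 + m) (by omega)
    simpa using this
  have hrn : r (1 + m) ≠ 0 := (hr (1+m) (by omega)).ne'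
  have hsum := hlr (1 + m) (by omega)
  simp only [Nat.add_sub_cancel_left, h2, h1, h3, Nat.add_sub_cancel]
  field_simp
  linear_combination (xp l r m + tp l r m) * hsum
end basics

section filt
variable {Ω : Type*} [MeasurableSpace Ω] {X : ℕ → Ω → ℕ}

lemma natFilt_le (hX : ∀ i, Measurable (X i)) (m : ℕ) :
    natFilt X m ≤ ‹MeasurableSpace Ω› := by
  apply iSup₂_le
  intro i _
  exact Measurable.comap_le (hX i)

lemma natFilt_mono {m m' : ℕ} (h : m ≤ m') : natFilt X m ≤ natFilt X m' := by
  apply iSup₂_le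
  intro i hi
  exact le_iSup₂ (f := fun i (_ : i ∈ Finset.range (m' + 1)) => MeasurableSpace.comap (X i) ⊤)
    i (Finset.mem_range.2 (by simp at hi; omega))

lemma measurable_natFilt (m i : ℕ) (hi : i ≤ m) : Measurable[natFilt X m] (X i) := by
  have h1 : Measurable[MeasurableSpace.comap (X i) ⊤] (X i) :=
    Measurable.of_comap_le le_rfl
  exact h1.mono (le_iSup₂ (f := fun i (_ : i ∈ Finset.range (m + 1)) =>
    MeasurableSpace.comap (X i) ⊤) i (Finset.mem_range.2 (by omega))) le_rfl

lemma measSet_eq (m i n : ℕ) (hi : i ≤ m) :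
    MeasurableSet[natFilt X m] {ω | X i ω = n} :=
  measurable_natFilt m i hi (MeasurableSet.singleton n)
end filt
section chain
variable {Ω : Type*} [MeasurableSpace Ω] {P : Measure Ω} {X : ℕ → Ω → ℕ} {k : ℕ} {l r : ℕ → ℝ}
  (hC : IsBDChain P X k l r)

lemma lint_comp (Y : Ω → ℕ) (hY : Measurable Y) (g : ℕ → ℝ≥0∞) {S : Set Ω}
    (hS : MeasurableSet S) :
    ∫⁻ ω in S, g (Y ω) ∂P = ∑' n, g n * P (S ∩ {ω | Y ω = n}) := by
  rw [← lintegral_map measurable_from_top hY, lintegral_countable']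
  congr 1
  ext n
  rw [Measure.map_apply hY (measurableSet_singleton n),
    Measure.restrict_apply (hY (measurableSet_singleton n)), Set.inter_comm]
  rfl

include hC

lemma step_null (m n j : ℕ) (hn : 1 ≤ n) (hj1 : j ≠ n + 1) (hj2 : j ≠ n - 1)
    {A : Set Ω} (hA : MeasurableSet[natFilt X m] A) :
    P (A ∩ {ω | X m ω = n ∧ X (m + 1) ω = j}) = 0 := by
  have hP := hC.isProb
  have hAm : MeasurableSet A := natFilt_le hC.meas m A hA
  have hXm := hC.meas m
  have hXm1 := hC.meas (m + 1)
  set S := A ∩ {ω | X m ω = n} with hSdef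
  have hSm : MeasurableSet S := hAm.inter (hXm (measurableSet_singleton n))
  have hUeq : A ∩ {ω | X m ω = n ∧ X (m + 1) ω = n + 1}
      = S ∩ {ω | X (m+1) ω = n + 1} := by
    rw [hSdef, Set.inter_assoc]; congr 1
  have hDeq : A ∩ {ω | X m ω = n ∧ X (m + 1) ω = n - 1}
      = S ∩ {ω | X (m+1) ω = n - 1} := by
    rw [hSdef, Set.inter_assoc]; congr 1
  have hTeq : A ∩ {ω | X m ω = n ∧ X (m + 1) ω = j}
      = S ∩ {ω | X (m+1) ω = j} := by
    rw [hSdef, Set.inter_assoc]; congr 1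
  set U := S ∩ {ω | X (m+1) ω = n + 1}
  set D := S ∩ {ω | X (m+1) ω = n - 1}
  set T := S ∩ {ω | X (m+1) ω = j}
  have hUm : MeasurableSet U := hSm.inter (hXm1 (measurableSet_singleton _))
  have hDm : MeasurableSet D := hSm.inter (hXm1 (measurableSet_singleton _))
  have hTm : MeasurableSet T := hSm.inter (hXm1 (measurableSet_singleton _))
  have hPU : P U + P D = P S := by
    rw [← hUeq, ← hDeq, hC.step_up m n hn A hA, hC.step_down m n hn A hA, ← hSdef,
      ← add_mul, ← ENNReal.ofReal_add (hC.r_pos n hn).le (hC.l_pos n hn).le]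
    rw [show r n + l n = 1 by linarith [hC.lr_one n hn]]
    simp
  have hdisj1 : Disjoint U T := by
    apply Set.disjoint_left.2
    rintro ω ⟨_, h1⟩ ⟨_, h2⟩
    exact hj1 (h2.symm.trans h1 ▸ rfl)
  have hdisj2 : Disjoint D T := by
    apply Set.disjoint_left.2
    rintro ω ⟨_, h1⟩ ⟨_, h2⟩
    exact hj2 (h2.symm.trans h1 ▸ rfl)
  have hdisj3 : Disjoint U D := by
    apply Set.disjoint_left.2
    rintro ω ⟨_, h1⟩ ⟨_, h2⟩
    simp only [Set.mem_setOf_eq] at h1 h2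
    omega
  have hle : P U + P D + P T ≤ P S := by
    rw [← measure_union hdisj3 hDm,
      ← measure_union (Set.disjoint_union_left.2 ⟨hdisj1, hdisj2⟩) hTm]
    exact measure_mono (by
      apply Set.union_subset (Set.union_subset _ _) _ <;> exact Set.inter_subset_left)
  rw [hPU] at hle
  rw [hTeq]
  have hfin : P S ≠ ⊤ := (measure_lt_top P S).ne
  have h0 : P T ≤ 0 := (ENNReal.add_le_add_iff_left hfin).1 (by simpa using hle)
  exact le_antisymm h0 (zero_le)

lemma mart (m : ℕ) {A : Set Ω} (hA : MeasurableSet[natFilt X m] A)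
    (hA1 : ∀ ω ∈ A, 1 ≤ X m ω) :
    ∫⁻ ω in A, ENNReal.ofReal (xp l r (X (m + 1) ω)) ∂P
      = ∫⁻ ω in A, ENNReal.ofReal (xp l r (X m ω)) ∂P := by
  have hP := hC.isProb
  set φ : ℕ → ℝ≥0∞ := fun n => ENNReal.ofReal (xp l r n) with hφ
  have hAm : MeasurableSet A := natFilt_le hC.meas m A hA
  have hXm := hC.meas m
  have hXm1 := hC.meas (m + 1)
  have hcover : A = ⋃ n, A ∩ {ω | X m ω = n} := by
    ext ω; simp
  have hmeas : ∀ n : ℕ, MeasurableSet (A ∩ {ω | X m ω = n}) :=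
    fun n => hAm.inter (hXm (measurableSet_singleton n))
  have hdisj : Pairwise (Function.onFun Disjoint fun n => A ∩ {ω | X m ω = n}) := by
    intro a b hab
    apply Set.disjoint_left.2
    rintro ω ⟨_, h1⟩ ⟨_, h2⟩
    exact hab (h1.symm.trans h2)
  have keyn : ∀ n : ℕ, ∫⁻ ω in A ∩ {ω | X m ω = n}, φ (X (m+1) ω) ∂P
      = φ n * P (A ∩ {ω | X m ω = n}) := by
    intro n
    rcases Nat.eq_zero_or_pos n with rfl | hn
    · have : A ∩ {ω | X m ω = 0} = ∅ := by
        ext ω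
        simp only [Set.mem_inter_iff, Set.mem_setOf_eq, Set.mem_empty_iff_false, iff_false]
        rintro ⟨hωA, h0⟩
        have := hA1 ω hωA
        omega
      simp [this]
    · rw [lint_comp (X (m+1)) hXm1 φ (hmeas n)]
      have hrw : ∀ j : ℕ, A ∩ {ω | X m ω = n} ∩ {ω | X (m+1) ω = j}
          = A ∩ {ω | X m ω = n ∧ X (m+1) ω = j} := by
        intro j; rw [Set.inter_assoc]; congr 1
      rw [tsum_eq_sum (s := {n + 1, n - 1}) (fun j hj => by
        simp only [Finset.mem_insert, Finset.mem_singleton] at hj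
        push_neg at hj
        rw [hrw j, step_null hC m n j hn hj.1 hj.2 hA]
        simp)]
      rw [Finset.sum_pair (by omega : n + 1 ≠ n - 1)]
      rw [hrw, hrw, hC.step_up m n hn A hA, hC.step_down m n hn A hA]
      have hkey := key_identity hC.r_pos hC.lr_one n hn
      set Q := P (A ∩ {ω | X m ω = n}) with hQ
      have hxnn : ∀ i : ℕ, 0 ≤ xp l r i := xp_nonneg hC.l_pos hC.r_pos
      have h1 : φ (n+1) * (ENNReal.ofReal (r n) * Q)
          + φ (n-1) * (ENNReal.ofReal (l n) * Q) = φ n * Q := by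
        rw [hφ]
        simp only []
        rw [← mul_assoc, ← mul_assoc,
          ← ENNReal.ofReal_mul (hxnn (n+1)), ← ENNReal.ofReal_mul (hxnn (n-1)),
          ← add_mul, ← ENNReal.ofReal_add (mul_nonneg (xp_nonneg hC.l_pos hC.r_pos _) (hC.r_pos n hn).le) (mul_nonneg (xp_nonneg hC.l_pos hC.r_pos _) (hC.l_pos n hn).le)]
        congr 2
        rw [← hkey]; ring
      rw [h1]
  -- now sum up
  calc ∫⁻ ω in A, φ (X (m + 1) ω) ∂P
      = ∑' n : ℕ, ∫⁻ ω in A ∩ {ω | X m ω = n}, φ (X (m+1) ω) ∂P := by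
        conv_lhs => rw [hcover]
        exact lintegral_iUnion hmeas hdisj _
    _ = ∑' n : ℕ, φ n * P (A ∩ {ω | X m ω = n}) := by
        exact tsum_congr keyn
    _ = ∫⁻ ω in A, φ (X m ω) ∂P := (lint_comp (X m) hXm φ hAm).symm


omit hC

noncomputable def stopP (X : ℕ → Ω → ℕ) (S : Set ℕ) : ℕ → Ω → ℕ
  | 0 => X 0
  | (j+1) => fun ω => if ∃ i ≤ j, X i ω ∈ S then stopP X S j ω else X (j+1) ω

variable {S : Set ℕ}

lemma stopP_eq {j : ℕ} {ω : Ω} (h : ∀ i < j, X i ω ∉ S) : stopP X S j ω = X j ω := by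
  cases j with
  | zero => rfl
  | succ j =>
    show (if ∃ i ≤ j, X i ω ∈ S then stopP X S j ω else X (j+1) ω) = _
    rw [if_neg]
    push_neg
    intro i hi
    exact h i (by omega)

lemma stopP_freeze {j : ℕ} {ω : Ω} (h : ∃ i ≤ j, X i ω ∈ S) :
    stopP X S (j + 1) ω = stopP X S j ω := if_pos h

lemma stopP_measurable (hX : ∀ i, Measurable (X i)) (j : ℕ) :
    Measurable (stopP X S j) := by
  induction j with
  | zero => exact hX 0
  | succ j ih =>
    have hcond : MeasurableSet {ω | ∃ i ≤ j, X i ω ∈ S} := by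
      have : {ω | ∃ i ≤ j, X i ω ∈ S} = ⋃ i ∈ Finset.range (j+1), X i ⁻¹' S := by
        ext ω; simp [Nat.lt_succ_iff]
      rw [this]
      exact MeasurableSet.biUnion (Finset.range (j+1)).countable_toSet
        fun i _ => hX i (by trivial)
    exact Measurable.ite hcond ih (hX (j+1))

lemma hitSetFilt (j : ℕ) : MeasurableSet[natFilt X j] {ω | ∃ i ≤ j, X i ω ∈ S} := by
  have : {ω | ∃ i ≤ j, X i ω ∈ S} = ⋃ i ∈ Finset.range (j+1), X i ⁻¹' S := by
    ext ω; simp [Nat.lt_succ_iff]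
  rw [this]
  exact MeasurableSet.biUnion (Finset.range (j+1)).countable_toSet
    fun i hi => measurable_natFilt j i (Nat.lt_succ_iff.1 (Finset.mem_range.1 hi)) (by trivial)

include hC

lemma stopP_exp (h0 : 0 ∈ S) (j : ℕ) :
    ∫⁻ ω, ENNReal.ofReal (xp l r (stopP X S j ω)) ∂P = ENNReal.ofReal (xp l r k) := by
  have hP := hC.isProb
  induction j with
  | zero =>
    have : ∫⁻ ω, ENNReal.ofReal (xp l r (stopP X S 0 ω)) ∂P
        = ∫⁻ _ : Ω, ENNReal.ofReal (xp l r k) ∂P := by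
      apply lintegral_congr_ae
      filter_upwards [hC.init] with ω hω
      show ENNReal.ofReal (xp l r (X 0 ω)) = _
      rw [hω]
    rw [this, lintegral_const, measure_univ, mul_one]
  | succ j ih =>
    set A := {ω | ∃ i ≤ j, X i ω ∈ S} with hAdef
    have hAF : MeasurableSet[natFilt X j] A := hitSetFilt j
    have hAm : MeasurableSet A := natFilt_le hC.meas j A hAF
    have h1 : ∫⁻ ω in A, ENNReal.ofReal (xp l r (stopP X S (j+1) ω)) ∂P
        = ∫⁻ ω in A, ENNReal.ofReal (xp l r (stopP X S j ω)) ∂P := by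
      apply setLIntegral_congr_fun hAm
      intro ω hω
      dsimp only
      rw [stopP_freeze hω]
    have h2 : ∫⁻ ω in Aᶜ, ENNReal.ofReal (xp l r (stopP X S (j+1) ω)) ∂P
        = ∫⁻ ω in Aᶜ, ENNReal.ofReal (xp l r (stopP X S j ω)) ∂P := by
      have e1 : ∫⁻ ω in Aᶜ, ENNReal.ofReal (xp l r (stopP X S (j+1) ω)) ∂P
          = ∫⁻ ω in Aᶜ, ENNReal.ofReal (xp l r (X (j+1) ω)) ∂P := by
        apply setLIntegral_congr_fun hAm.compl
        intro ω hω
        show ENNReal.ofReal (xp l r (if ∃ i ≤ j, X i ω ∈ S then stopP X S j ω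
          else X (j+1) ω)) = _
        rw [if_neg (by simpa [hAdef] using hω)]
      have e2 : ∫⁻ ω in Aᶜ, ENNReal.ofReal (xp l r (X j ω)) ∂P
          = ∫⁻ ω in Aᶜ, ENNReal.ofReal (xp l r (stopP X S j ω)) ∂P := by
        apply setLIntegral_congr_fun hAm.compl
        intro ω hω
        dsimp only
        rw [stopP_eq (fun i hi => by
          simp only [hAdef, Set.mem_compl_iff, Set.mem_setOf_eq, not_exists] at hω
          exact fun hin => hω i ⟨by omega, hin⟩)]
      rw [e1, ← e2]
      apply mart hC j hAF.compl
      intro ω hω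
      simp only [hAdef, Set.mem_compl_iff, Set.mem_setOf_eq, not_exists] at hω
      by_contra hcon
      have hz : X j ω = 0 := by omega
      exact hω j ⟨le_rfl, hz ▸ h0⟩
    rw [← lintegral_add_compl _ hAm, h1, h2, lintegral_add_compl _ hAm, ih]
include hC in


/-- One-step lower bound for moving up. -/
lemma upStep (t : ℕ) {B : Set Ω} (hB : MeasurableSet[natFilt X t] B)
    {M : ℕ} (hb : ∀ ω ∈ B, 1 ≤ X t ω ∧ X t ω ≤ M)
    {δ : ℝ} (hδ0 : 0 ≤ δ) (hδ : ∀ n, 1 ≤ n → n ≤ M → δ ≤ r n) :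
    ENNReal.ofReal δ * P B ≤ P (B ∩ {ω | X (t+1) ω = X t ω + 1}) := by
  have hBm : MeasurableSet B := natFilt_le hC.meas t B hB
  have hXt := hC.meas t
  have hXt1 := hC.meas (t+1)
  have hcover : B ∩ {ω | X (t+1) ω = X t ω + 1}
      = ⋃ n : ℕ, B ∩ {ω | X t ω = n ∧ X (t+1) ω = n + 1} := by
    ext ω
    simp only [Set.mem_inter_iff, Set.mem_setOf_eq, Set.mem_iUnion]
    constructor
    · rintro ⟨h1, h2⟩; exact ⟨X t ω, h1, rfl, h2⟩
    · rintro ⟨n, h1, h2, h3⟩; exact ⟨h1, by rw [h2, h3]⟩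
  have hmeas : ∀ n : ℕ, MeasurableSet (B ∩ {ω | X t ω = n ∧ X (t+1) ω = n + 1}) := by
    intro n
    exact hBm.inter (((hXt (measurableSet_singleton n)).inter
      (hXt1 (measurableSet_singleton (n+1)))))
  have hdisj : Pairwise (Function.onFun Disjoint fun n => B ∩ {ω | X t ω = n ∧ X (t+1) ω = n + 1}) := by
    intro a b hab
    apply Set.disjoint_left.2
    rintro ω ⟨_, h1, _⟩ ⟨_, h2, _⟩
    exact hab (h1.symm.trans h2)
  rw [hcover, measure_iUnion hdisj hmeas]
  have hBcover : B = ⋃ n : ℕ, B ∩ {ω | X t ω = n} := by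
    ext ω; simp
  have hBdisj : Pairwise (Function.onFun Disjoint fun n => B ∩ {ω | X t ω = n}) := by
    intro a b hab
    apply Set.disjoint_left.2
    rintro ω ⟨_, h1⟩ ⟨_, h2⟩
    exact hab (h1.symm.trans h2)
  have hBmeas : ∀ n : ℕ, MeasurableSet (B ∩ {ω | X t ω = n}) :=
    fun n => hBm.inter (hXt (measurableSet_singleton n))
  conv_lhs => rw [hBcover]
  rw [measure_iUnion hBdisj hBmeas, ENNReal.tsum_mul_left.symm]
  apply ENNReal.tsum_le_tsum
  intro n
  by_cases hn : 1 ≤ n ∧ n ≤ M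
  · rw [hC.step_up t n hn.1 B hB]
    exact mul_le_mul_left (ENNReal.ofReal_le_ofReal (hδ n hn.1 hn.2)) _
  · have : B ∩ {ω | X t ω = n} = ∅ := by
      ext ω
      simp only [Set.mem_inter_iff, Set.mem_setOf_eq, Set.mem_empty_iff_false, iff_false]
      rintro ⟨hωB, hωn⟩
      have := hb ω hωB
      omega
    rw [this]
    simp

/-- One-step lower bound for moving down. -/
lemma downStep (t : ℕ) {B : Set Ω} (hB : MeasurableSet[natFilt X t] B)
    {M : ℕ} (hb : ∀ ω ∈ B, 1 ≤ X t ω ∧ X t ω ≤ M)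
    {δ : ℝ} (hδ0 : 0 ≤ δ) (hδ : ∀ n, 1 ≤ n → n ≤ M → δ ≤ l n) :
    ENNReal.ofReal δ * P B ≤ P (B ∩ {ω | X (t+1) ω = X t ω - 1}) := by
  have hBm : MeasurableSet B := natFilt_le hC.meas t B hB
  have hXt := hC.meas t
  have hXt1 := hC.meas (t+1)
  have hcover : B ∩ {ω | X (t+1) ω = X t ω - 1}
      = ⋃ n : ℕ, B ∩ {ω | X t ω = n ∧ X (t+1) ω = n - 1} := by
    ext ω
    simp only [Set.mem_inter_iff, Set.mem_setOf_eq, Set.mem_iUnion]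
    constructor
    · rintro ⟨h1, h2⟩; exact ⟨X t ω, h1, rfl, h2⟩
    · rintro ⟨n, h1, h2, h3⟩; exact ⟨h1, by rw [h2, h3]⟩
  have hmeas : ∀ n : ℕ, MeasurableSet (B ∩ {ω | X t ω = n ∧ X (t+1) ω = n - 1}) := by
    intro n
    exact hBm.inter (((hXt (measurableSet_singleton n)).inter
      (hXt1 (measurableSet_singleton (n-1)))))
  have hdisj : Pairwise (Function.onFun Disjoint fun n => B ∩ {ω | X t ω = n ∧ X (t+1) ω = n - 1}) := by
    intro a b hab
    apply Set.disjoint_left.2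
    rintro ω ⟨_, h1, _⟩ ⟨_, h2, _⟩
    exact hab (h1.symm.trans h2)
  rw [hcover, measure_iUnion hdisj hmeas]
  have hBcover : B = ⋃ n : ℕ, B ∩ {ω | X t ω = n} := by
    ext ω; simp
  have hBdisj : Pairwise (Function.onFun Disjoint fun n => B ∩ {ω | X t ω = n}) := by
    intro a b hab
    apply Set.disjoint_left.2
    rintro ω ⟨_, h1⟩ ⟨_, h2⟩
    exact hab (h1.symm.trans h2)
  have hBmeas : ∀ n : ℕ, MeasurableSet (B ∩ {ω | X t ω = n}) :=
    fun n => hBm.inter (hXt (measurableSet_singleton n))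
  conv_lhs => rw [hBcover]
  rw [measure_iUnion hBdisj hBmeas, ENNReal.tsum_mul_left.symm]
  apply ENNReal.tsum_le_tsum
  intro n
  by_cases hn : 1 ≤ n ∧ n ≤ M
  · rw [hC.step_down t n hn.1 B hB]
    exact mul_le_mul_left (ENNReal.ofReal_le_ofReal (hδ n hn.1 hn.2)) _
  · have : B ∩ {ω | X t ω = n} = ∅ := by
      ext ω
      simp only [Set.mem_inter_iff, Set.mem_setOf_eq, Set.mem_empty_iff_false, iff_false]
      rintro ⟨hωB, hωn⟩
      have := hb ω hωB
      omega
    rw [this]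
    simp
omit hC

def UpRun (X : ℕ → Ω → ℕ) (t s : ℕ) : Set Ω :=
  {ω | ∀ i < s, X (t + i + 1) ω = X (t + i) ω + 1}

lemma upRun_succ (t s : ℕ) :
    UpRun X t (s + 1) = UpRun X t s ∩ {ω | X (t + s + 1) ω = X (t + s) ω + 1} := by
  ext ω
  simp only [UpRun, Set.mem_setOf_eq, Set.mem_inter_iff]
  constructor
  · intro h
    exact ⟨fun i hi => h i (by omega), h s (by omega)⟩
  · rintro ⟨h1, h2⟩ i hi
    rcases Nat.lt_succ_iff_lt_or_eq.1 hi with h | rfl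
    · exact h1 i h
    · exact h2

lemma upRun_val {t s : ℕ} {ω : Ω} (h : ω ∈ UpRun X t s) {i : ℕ} (hi : i ≤ s) :
    X (t + i) ω = X t ω + i := by
  induction i with
  | zero => simp
  | succ i ih =>
    have h1 := h i (by omega)
    have h2 := ih (by omega)
    show X (t + i + 1) ω = _
    omega

lemma stepEventFilt (u : ℕ) (f : ℕ → ℕ) :
    MeasurableSet[natFilt X (u + 1)] {ω | X (u + 1) ω = f (X u ω)} := by
  have : {ω | X (u + 1) ω = f (X u ω)}
      = ⋃ n : ℕ, ({ω | X u ω = n} ∩ {ω | X (u + 1) ω = f n}) := by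
    ext ω
    simp only [Set.mem_setOf_eq, Set.mem_iUnion, Set.mem_inter_iff]
    constructor
    · intro h; exact ⟨X u ω, rfl, h⟩
    · rintro ⟨n, h1, h2⟩; rw [h1]; exact h2
  rw [this]
  exact MeasurableSet.iUnion fun n =>
    ((measSet_eq (u+1) u n (by omega)).inter (measSet_eq (u+1) (u+1) (f n) le_rfl))

lemma upRunFilt (t s : ℕ) : MeasurableSet[natFilt X (t + s)] (UpRun X t s) := by
  have : UpRun X t s = ⋂ i ∈ Finset.range s, {ω | X (t + i + 1) ω = X (t + i) ω + 1} := by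
    ext ω; simp [UpRun]
  rw [this]
  apply MeasurableSet.biInter (Finset.range s).countable_toSet
  intro i hi
  simp only [Finset.coe_range, Set.mem_Iio] at hi
  exact natFilt_mono (by omega) _ (stepEventFilt (t + i) (fun n => n + 1))

def ConfSet (X : ℕ → Ω → ℕ) (N j : ℕ) : Set Ω :=
  {ω | ∀ i ≤ j, 1 ≤ X i ω ∧ X i ω < N}

lemma confSetFilt (N j : ℕ) : MeasurableSet[natFilt X j] (ConfSet X N j) := by
  have : ConfSet X N j = ⋂ i ∈ Finset.range (j+1), (X i) ⁻¹' {n | 1 ≤ n ∧ n < N} := by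
    ext ω; simp [ConfSet, Nat.lt_succ_iff]
  rw [this]
  apply MeasurableSet.biInter (Finset.range (j+1)).countable_toSet
  intro i hi
  simp only [Finset.coe_range, Set.mem_Iio] at hi
  exact measurable_natFilt j i (by omega) (by trivial)

include hC

lemma upRun_bound (t s N : ℕ) {B : Set Ω} (hB : MeasurableSet[natFilt X t] B)
    (hb : ∀ ω ∈ B, 1 ≤ X t ω ∧ X t ω < N)
    {δ : ℝ} (hδ0 : 0 ≤ δ) (hδ : ∀ n, 1 ≤ n → n ≤ N + s → δ ≤ r n) :
    ENNReal.ofReal δ ^ s * P B ≤ P (B ∩ UpRun X t s) := by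
  induction s with
  | zero =>
    simp only [pow_zero, one_mul]
    apply measure_mono
    intro ω hω
    exact ⟨hω, fun i hi => absurd hi (by omega)⟩
  | succ s ih =>
    have ihs : ENNReal.ofReal δ ^ s * P B ≤ P (B ∩ UpRun X t s) :=
      ih (fun n h1 h2 => hδ n h1 (by omega))
    have hBs : MeasurableSet[natFilt X (t + s)] (B ∩ UpRun X t s) :=
      (natFilt_mono (by omega) _ hB).inter (upRunFilt t s)
    have hbs : ∀ ω ∈ B ∩ UpRun X t s, 1 ≤ X (t + s) ω ∧ X (t + s) ω ≤ N + s := by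
      rintro ω ⟨h1, h2⟩
      have := upRun_val (X := X) h2 (le_refl s)
      have hω := hb ω h1
      omega
    have hstep := upStep hC (t + s) hBs hbs hδ0 (fun n h1 h2 => hδ n h1 (by omega))
    calc ENNReal.ofReal δ ^ (s+1) * P B
        = ENNReal.ofReal δ * (ENNReal.ofReal δ ^ s * P B) := by ring
      _ ≤ ENNReal.ofReal δ * P (B ∩ UpRun X t s) := by
          exact mul_le_mul_right ihs _
      _ ≤ P ((B ∩ UpRun X t s) ∩ {ω | X (t + s + 1) ω = X (t + s) ω + 1}) := hstep
      _ = P (B ∩ UpRun X t (s + 1)) := by rw [upRun_succ, Set.inter_assoc]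

lemma conf_zero (N : ℕ) : P {ω | ∀ i, 1 ≤ X i ω ∧ X i ω < N} = 0 := by
  have hP := hC.isProb
  rcases Nat.lt_or_ge N 2 with hN | hN
  · convert measure_empty (μ := P)
    ext ω
    simp only [Set.mem_setOf_eq, Set.mem_empty_iff_false, iff_false, not_forall]
    exact ⟨0, by omega⟩
  -- δ = min of r over [1, 2N]
  obtain ⟨δ, hδ0, hδ⟩ : ∃ δ : ℝ, 0 < δ ∧ ∀ n, 1 ≤ n → n ≤ 2 * N → δ ≤ r n := by
    have hne : (Finset.Icc 1 (2*N)).Nonempty := ⟨1, by simp; omega⟩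
    refine ⟨(Finset.Icc 1 (2*N)).inf' hne r, ?_, ?_⟩
    · obtain ⟨i, hi, hie⟩ := Finset.exists_mem_eq_inf' hne r
      rw [hie]
      exact hC.r_pos i (Finset.mem_Icc.1 hi).1
    · intro n h1 h2
      exact Finset.inf'_le r (Finset.mem_Icc.2 ⟨h1, h2⟩)
  set ε : ℝ≥0∞ := ENNReal.ofReal δ ^ N with hε
  have hε1 : 1 - ε < 1 := by
    apply ENNReal.sub_lt_self ENNReal.one_ne_top one_ne_zero
    rw [hε]
    exact (ENNReal.pow_pos (ENNReal.ofReal_pos.2 hδ0) N).ne'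
  have hiter : ∀ q : ℕ, P (ConfSet X N (q * N)) ≤ (1 - ε) ^ q := by
    intro q
    induction q with
    | zero => simpa using prob_le_one
    | succ q ih =>
      have hCq : MeasurableSet[natFilt X (q * N)] (ConfSet X N (q * N)) := confSetFilt N _
      have hCqm : MeasurableSet (ConfSet X N (q * N)) := natFilt_le hC.meas _ _ hCq
      have hrun := upRun_bound hC (q * N) N N hCq
        (fun ω hω => hω (q * N) le_rfl)
        hδ0.le (fun n h1 h2 => hδ n h1 (by omega))
      set E := ConfSet X N (q * N) ∩ UpRun X (q * N) N with hE
      have hEm : MeasurableSet E :=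
        hCqm.inter (natFilt_le hC.meas _ _ (upRunFilt (q*N) N))
      have hsub : ConfSet X N ((q + 1) * N) ⊆ ConfSet X N (q * N) \ E := by
        intro ω hω
        refine ⟨fun i hi => hω i (by nlinarith), ?_⟩
        rintro ⟨hconf, hup⟩
        have hval := upRun_val (X := X) hup (le_refl N)
        have h1 := hω (q * N) (by nlinarith)
        have h2 := hω (q * N + N) (by nlinarith)
        omega
      calc P (ConfSet X N ((q+1) * N)) ≤ P (ConfSet X N (q * N) \ E) := measure_mono hsub
        _ = P (ConfSet X N (q * N)) - P E := by
            rw [measure_diff Set.inter_subset_left hEm.nullMeasurableSet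
              (measure_ne_top P E)]
        _ ≤ P (ConfSet X N (q * N)) - ε * P (ConfSet X N (q * N)) := by
            exact tsub_le_tsub_left hrun _
        _ = (1 - ε) * P (ConfSet X N (q * N)) := by
            rw [ENNReal.sub_mul (fun _ _ => measure_ne_top P _), one_mul]
        _ ≤ (1 - ε) * (1 - ε) ^ q := mul_le_mul_right ih _
        _ = (1 - ε) ^ (q + 1) := by ring
  have hsub2 : ∀ q : ℕ, {ω | ∀ i, 1 ≤ X i ω ∧ X i ω < N} ⊆ ConfSet X N (q * N) :=
    fun q ω hω i _ => hω i
  have htend : Tendsto (fun q : ℕ => (1 - ε) ^ q) atTop (nhds 0) :=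
    ENNReal.tendsto_pow_atTop_nhds_zero_of_lt_one hε1
  have hle : ∀ q : ℕ, P {ω | ∀ i, 1 ≤ X i ω ∧ X i ω < N} ≤ (1 - ε) ^ q :=
    fun q => le_trans (measure_mono (hsub2 q)) (hiter q)
  exact le_antisymm (ge_of_tendsto htend (Eventually.of_forall hle)) (zero_le)
lemma pNever_pos (hlt : P {ω | ∃ m : ℕ, X m ω = 0} < 1) :
    0 < P {ω | ∀ m : ℕ, X m ω ≠ 0} := by
  have hP := hC.isProb
  have hmeas : MeasurableSet {ω | ∃ m : ℕ, X m ω = 0} := by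
    have : {ω | ∃ m : ℕ, X m ω = 0} = ⋃ m : ℕ, {ω | X m ω = 0} := by ext ω; simp
    rw [this]
    exact MeasurableSet.iUnion fun m => hC.meas m (measurableSet_singleton 0)
  have hcompl : {ω | ∀ m : ℕ, X m ω ≠ 0} = {ω | ∃ m : ℕ, X m ω = 0}ᶜ := by
    ext ω; simp
  rw [hcompl, prob_compl_eq_one_sub hmeas]
  exact tsub_pos_of_lt hlt

lemma part1 (hlt : P {ω | ∃ m : ℕ, X m ω = 0} < 1) : Tendsto (tp l r) atTop (nhds 0) := by
  have hP := hC.isProb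
  by_contra hcon
  have hnotsum : ¬ Summable (tp l r) := fun h => hcon h.tendsto_atTop_zero
  have hx : Tendsto (fun N => xp l r N) atTop atTop :=
    (not_summable_iff_tendsto_nat_atTop_of_nonneg
      (fun n => (tp_pos hC.l_pos hC.r_pos n).le)).1 hnotsum
  set c := P {ω | ∀ m : ℕ, X m ω ≠ 0} with hc
  have hc0 : c ≠ 0 := (pNever_pos hC hlt).ne'
  have hcT : c ≠ ⊤ := measure_ne_top P _
  have hbound : ∀ N : ℕ, ENNReal.ofReal (xp l r N) * c ≤ ENNReal.ofReal (xp l r k) := by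
    intro N
    set S : Set ℕ := {n | n = 0 ∨ N ≤ n} with hSdef
    have h0 : (0 : ℕ) ∈ S := Or.inl rfl
    set D : ℕ → Set Ω := fun j => {ω | N ≤ stopP X S j ω} with hD
    have hDmeas : ∀ j, MeasurableSet (D j) := fun j =>
      (stopP_measurable (S := S) hC.meas j) (by trivial : MeasurableSet {n : ℕ | N ≤ n})
    have hDmono : Monotone D := by
      apply monotone_nat_of_le_succ
      intro j ω hω
      simp only [hD, Set.mem_setOf_eq] at hω ⊢
      have hfr : ∃ i ≤ j, X i ω ∈ S := by
        by_contra hne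
        push_neg at hne
        have heq : stopP X S j ω = X j ω := stopP_eq (fun i hi hin => hne i (by omega) hin)
        rw [heq] at hω
        exact hne j le_rfl (Or.inr hω)
      rw [stopP_freeze hfr]
      exact hω
    have hDj : ∀ j, ENNReal.ofReal (xp l r N) * P (D j) ≤ ENNReal.ofReal (xp l r k) := by
      intro j
      have h1 : ENNReal.ofReal (xp l r N) * P (D j)
          = ∫⁻ ω in D j, ENNReal.ofReal (xp l r N) ∂P := by
        rw [setLIntegral_const, mul_comm]
      rw [h1, ← stopP_exp hC h0 j]
      calc ∫⁻ ω in D j, ENNReal.ofReal (xp l r N) ∂P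
          ≤ ∫⁻ ω in D j, ENNReal.ofReal (xp l r (stopP X S j ω)) ∂P := by
            apply setLIntegral_mono
              ((ENNReal.measurable_ofReal.comp (measurable_from_top (f := xp l r))).comp
                (stopP_measurable (S := S) hC.meas j))
            intro ω hω
            exact ENNReal.ofReal_le_ofReal
              (xp_mono hC.l_pos hC.r_pos hω)
        _ ≤ ∫⁻ ω, ENNReal.ofReal (xp l r (stopP X S j ω)) ∂P :=
            setLIntegral_le_lintegral _ _
    have hcover : {ω | ∀ m : ℕ, X m ω ≠ 0} ⊆ (⋃ j, D j) ∪ {ω | ∀ i, 1 ≤ X i ω ∧ X i ω < N} := by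
      intro ω hω
      simp only [Set.mem_setOf_eq] at hω
      by_cases hconf : ∀ i, 1 ≤ X i ω ∧ X i ω < N
      · exact Or.inr hconf
      · left
        push_neg at hconf
        obtain ⟨i, hi⟩ := hconf
        have hiS : ∃ i, X i ω ∈ S := by
          refine ⟨i, Or.inr ?_⟩
          have := hω i
          omega
        set i₀ := Nat.find hiS with hi₀
        have hmem : X i₀ ω ∈ S := Nat.find_spec hiS
        have hlt' : ∀ i' < i₀, X i' ω ∉ S := fun i' hi' => Nat.find_min hiS hi'
        refine Set.mem_iUnion.2 ⟨i₀, ?_⟩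
        simp only [hD, Set.mem_setOf_eq]
        rw [stopP_eq hlt']
        rcases hmem with h | h
        · exact absurd h (hω i₀)
        · exact h
    have hUD : ENNReal.ofReal (xp l r N) * P (⋃ j, D j) ≤ ENNReal.ofReal (xp l r k) := by
      rw [Directed.measure_iUnion (hDmono.directed_le), ENNReal.mul_iSup]
      exact iSup_le hDj
    calc ENNReal.ofReal (xp l r N) * c
        ≤ ENNReal.ofReal (xp l r N) * (P (⋃ j, D j) + P {ω | ∀ i, 1 ≤ X i ω ∧ X i ω < N}) := by
          apply mul_le_mul_right
          exact le_trans (measure_mono hcover) (measure_union_le _ _)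
      _ = ENNReal.ofReal (xp l r N) * P (⋃ j, D j) := by rw [conf_zero hC N, add_zero]
      _ ≤ ENNReal.ofReal (xp l r k) := hUD
  -- contradiction
  set d := ENNReal.ofReal (xp l r k) / c with hd
  have hdT : d ≠ ⊤ := by
    rw [hd]
    exact (ENNReal.div_lt_top ENNReal.ofReal_ne_top hc0).ne
  have hled : ∀ N : ℕ, ENNReal.ofReal (xp l r N) ≤ d := by
    intro N
    rw [hd, ENNReal.le_div_iff_mul_le (Or.inl hc0) (Or.inl hcT)]
    exact hbound N
  obtain ⟨N, hN⟩ := (hx.eventually_ge_atTop (d.toReal + 1)).exists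
  have : d < ENNReal.ofReal (xp l r N) := by
    rw [ENNReal.lt_ofReal_iff_toReal_lt hdT]
    linarith
  exact absurd (hled N) (not_le.2 this)
omit hC

lemma sInf_image_coe {S : Set ℕ} (h : S.Nonempty) :
    sInf ((fun m : ℕ => (m : ℕ∞)) '' S) = ((sInf S : ℕ) : ℕ∞) := by
  apply le_antisymm
  · exact sInf_le (Set.mem_image_of_mem _ (Nat.sInf_mem h))
  · apply le_sInf
    rintro e ⟨u, hu, rfl⟩
    show ((sInf S : ℕ) : ℕ∞) ≤ (u : ℕ∞)
    exact_mod_cast Nat.sInf_le hu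

lemma sInf_image_coe_eq_iff {S : Set ℕ} {t : ℕ} :
    sInf ((fun m : ℕ => (m : ℕ∞)) '' S) = (t : ℕ∞) ↔ t ∈ S ∧ ∀ u < t, u ∉ S := by
  constructor
  · intro h
    rcases Set.eq_empty_or_nonempty S with rfl | hne
    · simp only [Set.image_empty, sInf_empty] at h
      exact absurd h.symm (by simp)
    · rw [sInf_image_coe hne, Nat.cast_inj] at h
      subst h
      exact ⟨Nat.sInf_mem hne, fun u hu => Nat.notMem_of_lt_sInf hu⟩
  · rintro ⟨h1, h2⟩
    rw [sInf_image_coe ⟨t, h1⟩, Nat.cast_inj]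
    apply le_antisymm (Nat.sInf_le h1)
    by_contra hc
    push_neg at hc
    exact h2 _ hc (Nat.sInf_mem ⟨t, h1⟩)

/-- `q`-th visit time (with spacing `N`) to the window `[1, N)`. -/
noncomputable def sigT (X : ℕ → Ω → ℕ) (N : ℕ) : ℕ → Ω → ℕ∞
  | 0 => fun _ => 0
  | (q+1) => fun ω => sInf ((fun m : ℕ => (m : ℕ∞)) ''
      {t | sigT X N q ω + (N : ℕ∞) ≤ (t : ℕ∞) ∧ 1 ≤ X t ω ∧ X t ω < N})

lemma sigT_succ_eq_iff {N q t : ℕ} {ω : Ω} :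
    sigT X N (q + 1) ω = (t : ℕ∞) ↔
      ∃ s : ℕ, sigT X N q ω = (s : ℕ∞) ∧ s + N ≤ t ∧ (1 ≤ X t ω ∧ X t ω < N) ∧
        ∀ u, s + N ≤ u → u < t → ¬(1 ≤ X u ω ∧ X u ω < N) := by
  show sInf _ = _ ↔ _
  rw [sInf_image_coe_eq_iff]
  constructor
  · rintro ⟨⟨hle, hvis⟩, hmin⟩
    have hne : sigT X N q ω ≠ ⊤ := by
      intro hT
      rw [hT] at hle
      simp at hle
    obtain ⟨s, hs⟩ : ∃ s : ℕ, sigT X N q ω = (s : ℕ∞) := by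
      cases h : sigT X N q ω with
      | top => exact absurd h hne
      | coe s => exact ⟨s, rfl⟩
    rw [hs] at hle
    have hsN : s + N ≤ t := by exact_mod_cast hle
    refine ⟨s, hs, hsN, hvis, fun u hu1 hu2 hvisu => ?_⟩
    exact hmin u hu2 ⟨by rw [hs]; exact_mod_cast hu1, hvisu⟩
  · rintro ⟨s, hs, hsN, hvis, hmin⟩
    refine ⟨⟨by rw [hs]; exact_mod_cast hsN, hvis⟩, fun u hu ⟨hu1, hu2⟩ => ?_⟩
    rw [hs] at hu1
    exact hmin u (by exact_mod_cast hu1) hu hu2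

lemma sigT_filt (N : ℕ) : ∀ q t : ℕ, MeasurableSet[natFilt X t] {ω | sigT X N q ω = (t : ℕ∞)} := by
  intro q
  induction q with
  | zero =>
    intro t
    rcases Nat.eq_zero_or_pos t with rfl | ht
    · have : {ω : Ω | sigT X N 0 ω = ((0:ℕ) : ℕ∞)} = Set.univ := by
        ext ω; simp [sigT]
      rw [this]; exact MeasurableSet.univ
    · have : {ω : Ω | sigT X N 0 ω = (t : ℕ∞)} = ∅ := by
        ext ω
        simp only [sigT, Set.mem_setOf_eq, Set.mem_empty_iff_false, iff_false]
        intro h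
        have : (0:ℕ) = t := by exact_mod_cast h
        omega
      rw [this]; exact @MeasurableSet.empty Ω (natFilt X t)
  | succ q ih =>
    intro t
    have hdecomp : {ω : Ω | sigT X N (q+1) ω = (t : ℕ∞)}
        = ⋃ (s : ℕ) (_ : s + N ≤ t),
          ({ω | sigT X N q ω = (s : ℕ∞)} ∩ {ω | 1 ≤ X t ω ∧ X t ω < N} ∩
            ⋂ (u : ℕ) (_ : s + N ≤ u) (_ : u < t), {ω | ¬(1 ≤ X u ω ∧ X u ω < N)}) := by
      ext ω
      simp only [Set.mem_setOf_eq, Set.mem_iUnion, Set.mem_inter_iff, Set.mem_iInter,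
        sigT_succ_eq_iff]
      constructor
      · rintro ⟨s, h1, h2, h3, h4⟩
        exact ⟨s, h2, ⟨h1, h3⟩, fun u hu1 hu2 => h4 u hu1 hu2⟩
      · rintro ⟨s, h2, ⟨h1, h3⟩, h4⟩
        exact ⟨s, h1, h2, h3, fun u hu1 hu2 => h4 u hu1 hu2⟩
    rw [hdecomp]
    apply MeasurableSet.iUnion
    intro s
    apply MeasurableSet.iUnion
    intro hs
    apply MeasurableSet.inter
    · apply MeasurableSet.inter
      · exact natFilt_mono (by omega) _ (ih s)
      · exact measurable_natFilt t t le_rfl (by trivial : MeasurableSet {n : ℕ | 1 ≤ n ∧ n < N})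
    · apply MeasurableSet.iInter
      intro u
      apply MeasurableSet.iInter
      intro hu1
      apply MeasurableSet.iInter
      intro hu2
      exact measurable_natFilt t u (by omega) (by trivial : MeasurableSet {n : ℕ | ¬(1 ≤ n ∧ n < N)})
def DownRun (X : ℕ → Ω → ℕ) (t s : ℕ) : Set Ω :=
  {ω | ∀ i < s, X (t + i + 1) ω = X (t + i) ω - 1}

lemma downRun_succ (t s : ℕ) :
    DownRun X t (s + 1) = DownRun X t s ∩ {ω | X (t + s + 1) ω = X (t + s) ω - 1} := by
  ext ω
  simp only [DownRun, Set.mem_setOf_eq, Set.mem_inter_iff]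
  constructor
  · intro h
    exact ⟨fun i hi => h i (by omega), h s (by omega)⟩
  · rintro ⟨h1, h2⟩ i hi
    rcases Nat.lt_succ_iff_lt_or_eq.1 hi with h | rfl
    · exact h1 i h
    · exact h2

lemma downRun_val {t s : ℕ} {ω : Ω} (h : ω ∈ DownRun X t s) {i : ℕ} (hi : i ≤ s) :
    X (t + i) ω = X t ω - i := by
  induction i with
  | zero => simp
  | succ i ih =>
    have h1 := h i (by omega)
    have h2 := ih (by omega)
    show X (t + i + 1) ω = _
    omega

lemma downRunFilt (t s : ℕ) : MeasurableSet[natFilt X (t + s)] (DownRun X t s) := by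
  have : DownRun X t s = ⋂ i ∈ Finset.range s, {ω | X (t + i + 1) ω = X (t + i) ω - 1} := by
    ext ω; simp [DownRun]
  rw [this]
  apply MeasurableSet.biInter (Finset.range s).countable_toSet
  intro i hi
  simp only [Finset.coe_range, Set.mem_Iio] at hi
  exact natFilt_mono (by omega) _ (stepEventFilt (t + i) (fun n => n - 1))

include hC

lemma downRun_bound (t s M : ℕ) {B : Set Ω} (hB : MeasurableSet[natFilt X t] B)
    (hb : ∀ ω ∈ B, s ≤ X t ω ∧ X t ω ≤ M)
    {δ : ℝ} (hδ0 : 0 ≤ δ) (hδ : ∀ n, 1 ≤ n → n ≤ M → δ ≤ l n) :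
    ENNReal.ofReal δ ^ s * P B ≤ P (B ∩ DownRun X t s) := by
  induction s with
  | zero =>
    simp only [pow_zero, one_mul]
    apply measure_mono
    intro ω hω
    exact ⟨hω, fun i hi => absurd hi (by omega)⟩
  | succ s ih =>
    have ihs : ENNReal.ofReal δ ^ s * P B ≤ P (B ∩ DownRun X t s) :=
      ih (fun ω hω => ⟨by have := hb ω hω; omega, (hb ω hω).2⟩)
    have hBs : MeasurableSet[natFilt X (t + s)] (B ∩ DownRun X t s) :=
      (natFilt_mono (by omega) _ hB).inter (downRunFilt t s)
    have hbs : ∀ ω ∈ B ∩ DownRun X t s, 1 ≤ X (t + s) ω ∧ X (t + s) ω ≤ M := by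
      rintro ω ⟨h1, h2⟩
      have := downRun_val (X := X) h2 (le_refl s)
      have hω := hb ω h1
      omega
    have hstep := downStep hC (t + s) hBs hbs hδ0 hδ
    calc ENNReal.ofReal δ ^ (s+1) * P B
        = ENNReal.ofReal δ * (ENNReal.ofReal δ ^ s * P B) := by ring
      _ ≤ ENNReal.ofReal δ * P (B ∩ DownRun X t s) := mul_le_mul_right ihs _
      _ ≤ P ((B ∩ DownRun X t s) ∩ {ω | X (t + s + 1) ω = X (t + s) ω - 1}) := hstep
      _ = P (B ∩ DownRun X t (s + 1)) := by rw [downRun_succ, Set.inter_assoc]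

/-- From a state in `[1,N)`, the chain hits `0` within `N` steps with probability
at least `δ^N`. -/
lemma down_hit (t N : ℕ) {B : Set Ω} (hB : MeasurableSet[natFilt X t] B)
    (hb : ∀ ω ∈ B, 1 ≤ X t ω ∧ X t ω < N)
    {δ : ℝ} (hδ0 : 0 ≤ δ) (hδ1 : δ ≤ 1) (hδ : ∀ n, 1 ≤ n → n ≤ N → δ ≤ l n) :
    ENNReal.ofReal δ ^ N * P B ≤ P (B ∩ {ω | ∃ u, t < u ∧ u ≤ t + N ∧ X u ω = 0}) := by
  have hBm : MeasurableSet B := natFilt_le hC.meas t B hB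
  have hXt := hC.meas t
  set C : ℕ → Set Ω := fun n => (B ∩ {ω | X t ω = n}) ∩ DownRun X t n with hCdef
  have hCm : ∀ n, MeasurableSet (C n) := fun n =>
    (hBm.inter (hXt (measurableSet_singleton n))).inter
      (natFilt_le hC.meas _ _ (downRunFilt t n))
  have hCdisj : Pairwise (Function.onFun Disjoint C) := by
    intro a b hab
    apply Set.disjoint_left.2
    rintro ω ⟨⟨_, h1⟩, _⟩ ⟨⟨_, h2⟩, _⟩
    exact hab (h1.symm.trans h2)
  have hCsub : ∀ n, C n ⊆ B ∩ {ω | ∃ u, t < u ∧ u ≤ t + N ∧ X u ω = 0} := by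
    rintro n ω ⟨⟨hωB, hωn⟩, hdr⟩
    have hn := hb ω hωB
    rw [Set.mem_setOf_eq] at hωn
    refine ⟨hωB, ⟨t + n, by omega, by omega, ?_⟩⟩
    have := downRun_val (X := X) hdr (le_refl n)
    omega
  have hCn : ∀ n, ENNReal.ofReal δ ^ N * P (B ∩ {ω | X t ω = n}) ≤ P (C n) := by
    intro n
    by_cases hn : 1 ≤ n ∧ n < N
    · have h1 : ENNReal.ofReal δ ^ N ≤ ENNReal.ofReal δ ^ n := by
        exact pow_le_pow_of_le_one (zero_le) (ENNReal.ofReal_le_one.2 hδ1) (by omega)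
      refine le_trans (mul_le_mul_left h1 _) ?_
      apply downRun_bound hC t n N
        (hB.inter (measurable_natFilt t t le_rfl (measurableSet_singleton n)))
        (fun ω hω => by
          have h3 : X t ω = n := hω.2
          omega)
        hδ0 hδ
    · have : B ∩ {ω | X t ω = n} = ∅ := by
        ext ω
        simp only [Set.mem_inter_iff, Set.mem_setOf_eq, Set.mem_empty_iff_false, iff_false]
        rintro ⟨hωB, hωn⟩
        have := hb ω hωB
        omega
      rw [this]
      simp
  have hBcover : B = ⋃ n : ℕ, B ∩ {ω | X t ω = n} := by ext ω; simp
  have hBdisj : Pairwise (Function.onFun Disjoint fun n => B ∩ {ω | X t ω = n}) := by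
    intro a b hab
    apply Set.disjoint_left.2
    rintro ω ⟨_, h1⟩ ⟨_, h2⟩
    exact hab (h1.symm.trans h2)
  have hPB : P B = ∑' n, P (B ∩ {ω | X t ω = n}) := by
    conv_lhs => rw [hBcover]
    exact measure_iUnion hBdisj (fun n => hBm.inter (hXt (measurableSet_singleton n)))
  calc ENNReal.ofReal δ ^ N * P B
      = ∑' n, ENNReal.ofReal δ ^ N * P (B ∩ {ω | X t ω = n}) := by
        rw [hPB, ENNReal.tsum_mul_left]
    _ ≤ ∑' n, P (C n) := ENNReal.tsum_le_tsum hCn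
    _ = P (⋃ n, C n) := (measure_iUnion hCdisj hCm).symm
    _ ≤ P (B ∩ {ω | ∃ u, t < u ∧ u ≤ t + N ∧ X u ω = 0}) :=
        measure_mono (Set.iUnion_subset hCsub)
omit hC

def Aev (X : ℕ → Ω → ℕ) (N q : ℕ) : Set Ω :=
  ⋃ t : ℕ, ({ω | sigT X N q ω = (t : ℕ∞)} ∩ {ω | ∀ u ≤ t + N, X u ω ≠ 0})

lemma no0Filt (t : ℕ) : MeasurableSet[natFilt X t] {ω | ∀ u ≤ t, X u ω ≠ 0} := by
  have : {ω : Ω | ∀ u ≤ t, X u ω ≠ 0} = ⋂ u ∈ Finset.range (t+1), {ω | X u ω ≠ 0} := by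
    ext ω; simp [Nat.lt_succ_iff]
  rw [this]
  apply MeasurableSet.biInter (Finset.range (t+1)).countable_toSet
  intro u hu
  simp only [Finset.coe_range, Set.mem_Iio] at hu
  exact measurable_natFilt t u (by omega) (by trivial : MeasurableSet {n : ℕ | n ≠ 0})

include hC

lemma aev_step (N q : ℕ) {δ : ℝ} (hδ0 : 0 ≤ δ) (hδ1 : δ ≤ 1)
    (hδ : ∀ n, 1 ≤ n → n ≤ N → δ ≤ l n) :
    P (Aev X N (q + 1)) ≤ (1 - ENNReal.ofReal δ ^ N) * P (Aev X N q) := by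
  have hP := hC.isProb
  set ε := ENNReal.ofReal δ ^ N with hε
  set B : ℕ → Set Ω := fun t => {ω | sigT X N (q+1) ω = (t : ℕ∞)} ∩ {ω | ∀ u ≤ t, X u ω ≠ 0}
    with hBdef
  have hBF : ∀ t, MeasurableSet[natFilt X t] (B t) := fun t =>
    (sigT_filt N (q+1) t).inter (no0Filt t)
  have hBm : ∀ t, MeasurableSet (B t) := fun t => natFilt_le hC.meas t _ (hBF t)
  have hBvis : ∀ t, ∀ ω ∈ B t, 1 ≤ X t ω ∧ X t ω < N := by
    rintro t ω ⟨h1, _⟩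
    rw [Set.mem_setOf_eq, sigT_succ_eq_iff] at h1
    obtain ⟨s, _, _, hvis, _⟩ := h1
    exact hvis
  have hGt : ∀ t : ℕ, P ({ω | sigT X N (q+1) ω = (t : ℕ∞)} ∩ {ω | ∀ u ≤ t + N, X u ω ≠ 0})
      ≤ (1 - ε) * P (B t) := by
    intro t
    have hhit := down_hit hC t N (hBF t) (hBvis t) hδ0 hδ1 hδ
    set H := {ω | ∃ u, t < u ∧ u ≤ t + N ∧ X u ω = 0} with hH
    have hsub : {ω | sigT X N (q+1) ω = (t : ℕ∞)} ∩ {ω | ∀ u ≤ t + N, X u ω ≠ 0}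
        ⊆ B t \ (B t ∩ H) := by
      rintro ω ⟨h1, h2⟩
      simp only [Set.mem_setOf_eq] at h1 h2
      refine ⟨⟨h1, fun u hu => h2 u (by omega)⟩, ?_⟩
      rintro ⟨_, u, hu1, hu2, hu3⟩
      exact h2 u hu2 hu3
    have hHm : MeasurableSet (B t ∩ H) := by
      apply (hBm t).inter
      have : H = ⋃ (u : ℕ) (_ : t < u) (_ : u ≤ t + N), {ω | X u ω = 0} := by
        ext ω
        simp only [hH, Set.mem_setOf_eq, Set.mem_iUnion]
        exact ⟨fun ⟨u,h1,h2,h3⟩ => ⟨u,h1,h2,h3⟩, fun ⟨u,h1,h2,h3⟩ => ⟨u,h1,h2,h3⟩⟩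
      rw [this]
      exact MeasurableSet.iUnion fun u => MeasurableSet.iUnion fun _ =>
        MeasurableSet.iUnion fun _ => hC.meas u (measurableSet_singleton 0)
    calc P ({ω | sigT X N (q+1) ω = (t : ℕ∞)} ∩ {ω | ∀ u ≤ t + N, X u ω ≠ 0})
        ≤ P (B t \ (B t ∩ H)) := measure_mono hsub
      _ = P (B t) - P (B t ∩ H) := by
          rw [measure_diff Set.inter_subset_left hHm.nullMeasurableSet (measure_ne_top P _)]
      _ ≤ P (B t) - ε * P (B t) := tsub_le_tsub_left hhit _
      _ = (1 - ε) * P (B t) := by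
          rw [ENNReal.sub_mul (fun _ _ => measure_ne_top P _), one_mul]
  have hBdisj : Pairwise (Function.onFun Disjoint B) := by
    intro a b hab
    apply Set.disjoint_left.2
    rintro ω ⟨h1, _⟩ ⟨h2, _⟩
    rw [Set.mem_setOf_eq] at h1 h2
    rw [h1] at h2
    exact hab (by exact_mod_cast h2)
  have hBsub : (⋃ t, B t) ⊆ Aev X N q := by
    rintro ω ⟨_, ⟨t, rfl⟩, ⟨h1, h2⟩⟩
    rw [Set.mem_setOf_eq, sigT_succ_eq_iff] at h1
    obtain ⟨s, hs, hsN, _, _⟩ := h1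
    simp only [Set.mem_setOf_eq] at h2
    exact Set.mem_iUnion.2 ⟨s, ⟨hs, fun u hu => h2 u (by omega)⟩⟩
  calc P (Aev X N (q + 1))
      ≤ ∑' t : ℕ, P ({ω | sigT X N (q+1) ω = (t : ℕ∞)} ∩ {ω | ∀ u ≤ t + N, X u ω ≠ 0}) :=
        measure_iUnion_le _
    _ ≤ ∑' t : ℕ, (1 - ε) * P (B t) := ENNReal.tsum_le_tsum hGt
    _ = (1 - ε) * ∑' t, P (B t) := ENNReal.tsum_mul_left
    _ = (1 - ε) * P (⋃ t, B t) := by rw [measure_iUnion hBdisj hBm]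
    _ ≤ (1 - ε) * P (Aev X N q) := mul_le_mul_right (measure_mono hBsub) _

lemma bad_null (N : ℕ) :
    P ({ω | ∀ m : ℕ, X m ω ≠ 0} ∩ {ω | ∀ j : ℕ, ∃ t, j ≤ t ∧ 1 ≤ X t ω ∧ X t ω < N}) = 0 := by
  have hP := hC.isProb
  set bad := {ω | ∀ m : ℕ, X m ω ≠ 0} ∩ {ω | ∀ j : ℕ, ∃ t, j ≤ t ∧ 1 ≤ X t ω ∧ X t ω < N}
    with hbad
  rcases Nat.lt_or_ge N 2 with hN | hN
  · have : bad = ∅ := by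
      ext ω
      simp only [hbad, Set.mem_inter_iff, Set.mem_setOf_eq, Set.mem_empty_iff_false, iff_false,
        not_and]
      intro _ hio
      obtain ⟨t, _, h1, h2⟩ := hio 0
      omega
    rw [this]; exact measure_empty
  obtain ⟨δ, hδ0, hδ⟩ : ∃ δ : ℝ, 0 < δ ∧ ∀ n, 1 ≤ n → n ≤ N → δ ≤ l n := by
    have hne : (Finset.Icc 1 N).Nonempty := ⟨1, by simp; omega⟩
    refine ⟨(Finset.Icc 1 N).inf' hne l, ?_, ?_⟩
    · obtain ⟨i, hi, hie⟩ := Finset.exists_mem_eq_inf' hne l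
      rw [hie]
      exact hC.l_pos i (Finset.mem_Icc.1 hi).1
    · intro n h1 h2
      exact Finset.inf'_le l (Finset.mem_Icc.2 ⟨h1, h2⟩)
  have hδ1 : δ ≤ 1 := by
    have h1 := hδ 1 le_rfl (by omega)
    have h2 := hC.lr_one 1 le_rfl
    have h3 := hC.r_pos 1 le_rfl
    linarith
  set ε := ENNReal.ofReal δ ^ N with hε
  have hε1 : 1 - ε < 1 := by
    apply ENNReal.sub_lt_self ENNReal.one_ne_top one_ne_zero
    exact (ENNReal.pow_pos (ENNReal.ofReal_pos.2 hδ0) N).ne'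
  have hiter : ∀ q, P (Aev X N q) ≤ (1 - ε) ^ q := by
    intro q
    induction q with
    | zero => simpa using prob_le_one
    | succ q ih =>
      calc P (Aev X N (q+1)) ≤ (1 - ε) * P (Aev X N q) := aev_step hC N q hδ0.le hδ1 hδ
        _ ≤ (1 - ε) * (1 - ε) ^ q := mul_le_mul_right ih _
        _ = (1 - ε) ^ (q + 1) := by ring
  have hsub : ∀ q, bad ⊆ Aev X N q := by
    intro q
    rintro ω ⟨h0, hio⟩
    simp only [Set.mem_setOf_eq] at h0 hio
    have hfin : ∀ q : ℕ, ∃ t : ℕ, sigT X N q ω = (t : ℕ∞) := by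
      intro q
      induction q with
      | zero => exact ⟨0, rfl⟩
      | succ q ih =>
        obtain ⟨s, hs⟩ := ih
        obtain ⟨t, ht1, ht2⟩ := hio (s + N)
        have hne : {t : ℕ | sigT X N q ω + (N : ℕ∞) ≤ (t : ℕ∞) ∧ 1 ≤ X t ω ∧ X t ω < N}.Nonempty := by
          refine ⟨t, ?_, ht2⟩
          rw [hs]
          exact_mod_cast ht1
        refine ⟨sInf {t : ℕ | sigT X N q ω + (N : ℕ∞) ≤ (t : ℕ∞) ∧ 1 ≤ X t ω ∧ X t ω < N}, ?_⟩
        show sInf _ = _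
        rw [sInf_image_coe hne]
    obtain ⟨t, ht⟩ := hfin q
    exact Set.mem_iUnion.2 ⟨t, ⟨ht, fun u _ => h0 u⟩⟩
  have htend : Tendsto (fun q : ℕ => (1 - ε) ^ q) atTop (nhds 0) :=
    ENNReal.tendsto_pow_atTop_nhds_zero_of_lt_one hε1
  exact le_antisymm (ge_of_tendsto htend (Eventually.of_forall
    (fun q => le_trans (measure_mono (hsub q)) (hiter q)))) (zero_le)

/-- Almost surely, on never hitting `0`, the chain tends to infinity. -/
lemma escape : ∀ᵐ ω ∂P, (∀ m : ℕ, X m ω ≠ 0) → Tendsto (fun j => X j ω) atTop atTop := by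
  have hnull : P (⋃ N : ℕ, {ω | ∀ m : ℕ, X m ω ≠ 0}
      ∩ {ω | ∀ j : ℕ, ∃ t, j ≤ t ∧ 1 ≤ X t ω ∧ X t ω < N}) = 0 :=
    measure_iUnion_null fun N => bad_null hC N
  rw [ae_iff]
  apply measure_mono_null _ hnull
  intro ω hω
  simp only [Set.mem_setOf_eq] at hω
  rw [Classical.not_imp] at hω
  obtain ⟨h0, hnt⟩ := hω
  rw [tendsto_atTop_atTop] at hnt
  push_neg at hnt
  obtain ⟨b, hb⟩ := hnt
  refine Set.mem_iUnion.2 ⟨b, h0, fun j => ?_⟩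
  obtain ⟨t, ht1, ht2⟩ := hb j
  exact ⟨t, ht1, Nat.one_le_iff_ne_zero.2 (h0 t), ht2⟩
end chain


/-- If `P(X_m = 0 for some m) < 1`, then `t_n → 0`, and for any
non-decreasing sequence of stopping times `T_m` with `E[T_m] < ∞` and `T_m → T_∂`
a.s., `E[X_{T_m}] → +∞`. -/
theorem stmt8 {Ω : Type*} [MeasurableSpace Ω] (P : Measure Ω) (X : ℕ → Ω → ℕ)
    (k : ℕ) (l r : ℕ → ℝ) (hC : IsBDChain P X k l r)
    (hlt : P {ω | ∃ m : ℕ, X m ω = 0} < 1) :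
    Tendsto (tp l r) atTop (nhds 0) ∧
    ∀ T : ℕ → Ω → ℕ, (∀ m, IsBDStop X (T m)) →
      (∀ ω, Monotone fun m => T m ω) →
      (∀ m, ∫⁻ ω, (T m ω : ℝ≥0∞) ∂P < ⊤) →
      (∀ᵐ ω ∂P, Tendsto (fun m => (T m ω : ℕ∞)) atTop (nhds (hit0 X ω))) →
      Tendsto (fun m => ∫⁻ ω, (X (T m ω) ω : ℝ≥0∞) ∂P) atTop (nhds ⊤) := by

  have hP := hC.isProb
  constructor
  · exact part1 hC hlt
  intro T hstop hmono hfin hae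
  set f : ℕ → Ω → ℝ≥0∞ := fun m ω => (X (T m ω) ω : ℝ≥0∞) with hf
  have hfmeas : ∀ m, Measurable (f m) := by
    intro m
    have hmeas1 : Measurable fun ω => X (T m ω) ω := by
      apply measurable_to_countable'
      intro v
      have hpre : (fun ω => X (T m ω) ω) ⁻¹' {v}
          = ⋃ j : ℕ, ({ω | T m ω = j} ∩ {ω | X j ω = v}) := by
        ext ω
        simp only [Set.mem_preimage, Set.mem_singleton_iff, Set.mem_iUnion, Set.mem_inter_iff,
          Set.mem_setOf_eq]
        constructor
        · intro h; exact ⟨T m ω, rfl, h⟩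
        · rintro ⟨j, h1, h2⟩; rw [h1]; exact h2
      rw [hpre]
      exact MeasurableSet.iUnion fun j =>
        (natFilt_le hC.meas j _ (hstop m j)).inter (hC.meas j (measurableSet_singleton v))
    exact measurable_from_top.comp hmeas1
  set nev := {ω : Ω | ∀ m : ℕ, X m ω ≠ 0} with hnev
  have hnevm : MeasurableSet nev := by
    have : nev = ⋂ m : ℕ, {ω | X m ω = 0}ᶜ := by ext ω; simp [hnev]
    rw [this]
    exact MeasurableSet.iInter fun m => (hC.meas m (measurableSet_singleton 0)).compl
  have hc0 : P nev ≠ 0 := (pNever_pos hC hlt).ne'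
  have hae2 : ∀ᵐ ω ∂P, ω ∈ nev → Tendsto (fun m => f m ω) atTop (nhds ⊤) := by
    filter_upwards [escape hC, hae] with ω hesc htm hmem
    have hnev0 : ∀ m : ℕ, X m ω ≠ 0 := hmem
    have hhit : hit0 X ω = ⊤ := by
      have hempty : {m : ℕ | X m ω ∈ ({0} : Set ℕ)} = ∅ := by
        ext m; simp [hnev0 m]
      show sInf _ = ⊤
      rw [hempty]
      simp
    rw [hhit] at htm
    have hT : Tendsto (fun m => T m ω) atTop atTop := by
      rw [tendsto_atTop]
      intro b
      have hIoi : Set.Ioi ((b : ℕ∞)) ∈ nhds (⊤ : ℕ∞) :=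
        isOpen_Ioi.mem_nhds (by simp)
      filter_upwards [htm.eventually_mem hIoi] with m hm
      have : (b : ℕ∞) < (T m ω : ℕ∞) := hm
      exact_mod_cast this.le
    have hXT : Tendsto (fun m => X (T m ω) ω) atTop atTop := (hesc hnev0).comp hT
    rw [ENNReal.tendsto_nhds_top_iff_nat]
    intro n
    filter_upwards [hXT.eventually_ge_atTop (n + 1)] with m hm
    show (n : ℝ≥0∞) < (X (T m ω) ω : ℕ)
    exact_mod_cast Nat.lt_of_lt_of_le (Nat.lt_succ_self n) hm
  have h1 : ∫⁻ ω, liminf (fun m => f m ω) atTop ∂P = ⊤ := by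
    rw [eq_top_iff]
    calc (⊤ : ℝ≥0∞) = ⊤ * P nev := (ENNReal.top_mul hc0).symm
      _ = ∫⁻ _ω in nev, ⊤ ∂P := by rw [setLIntegral_const, mul_comm]
      _ = ∫⁻ ω in nev, liminf (fun m => f m ω) atTop ∂P := by
          apply (setLIntegral_congr_fun_ae hnevm ?_).symm
          filter_upwards [hae2] with ω h hmem
          exact (h hmem).liminf_eq
      _ ≤ ∫⁻ ω, liminf (fun m => f m ω) atTop ∂P := setLIntegral_le_lintegral _ _
  have h2 : liminf (fun m => ∫⁻ ω, f m ω ∂P) atTop = ⊤ :=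
    top_le_iff.1 (h1 ▸ lintegral_liminf_le hfmeas)
  rw [ENNReal.tendsto_nhds_top_iff_nat]
  intro n
  apply eventually_lt_of_lt_liminf
  · rw [h2]
    exact ENNReal.coe_lt_top
  · exact isBoundedUnder_of ⟨0, fun a => zero_le⟩
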